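/- Let A be a bounded subset of a real Hilbert space with Chebyshev radius r_H(A) = 1. Then for every n ≥ 2 there exist finitely many points x_1, …, x_k ∈ A such that the intersection of the closed balls B(x_i, 1 − 1/n), i = 1,…,k, is empty. -/

import Mathlib

open Filter Topology

noncomputable def chebRadius {H : Type*} [NormedAddCommGroup H] (A : Set H) : ℝ :=
  ⨅ y : H, ⨆ x : A, ‖(x : H) - y‖

lemma aux_ball_inter {H : Type*} [NormedAddCommGroup H] [InnerProductSpace ℝ H]
    [CompleteSpace H] {A : Set H} {r : ℝ} (hr0 : 0 ≤ r) (hA : A.Nonempty)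
    (hfin : ∀ s : Finset H, ↑s ⊆ A → (⋂ x ∈ s, Metric.closedBall x r).Nonempty) :
    ∃ y : H, ∀ x ∈ A, dist x y ≤ r := by
  classical
  set D : Finset H → Set H := fun s => ⋂ x ∈ s, Metric.closedBall x r with hDdef
  have hDconv : ∀ s, Convex ℝ (D s) := fun s => convex_iInter₂ fun x _ => convex_closedBall x r
  have hDclosed : ∀ s, IsClosed (D s) := fun s =>
    isClosed_biInter fun x _ => Metric.isClosed_closedBall
  have hDmono : ∀ {s t : Finset H}, s ⊆ t → D t ⊆ D s := by
    intro s t hst z hz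
    exact Set.mem_iInter₂.2 fun x hx => Set.mem_iInter₂.1 hz x (hst hx)
  have hmin : ∀ s : Finset H, ↑s ⊆ A → ∃ v ∈ D s, ‖v‖ = ⨅ w : D s, ‖(w : H)‖ := by
    intro s hs
    obtain ⟨v, hv, hveq⟩ := exists_norm_eq_iInf_of_complete_convex (hfin s hs)
      ((hDclosed s).isComplete) (hDconv s) (0 : H)
    refine ⟨v, hv, ?_⟩
    simpa [zero_sub, norm_neg] using hveq
  choose Y hY1 hY2 using hmin
  set d : Finset H → ℝ := fun s => ⨅ w : D s, ‖(w : H)‖ with hddef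
  have hbdd : ∀ s : Finset H, BddBelow (Set.range fun w : D s => ‖(w : H)‖) := by
    intro s
    exact ⟨0, by rintro _ ⟨w, rfl⟩; exact norm_nonneg _⟩
  have hd0 : ∀ s, 0 ≤ d s := fun s => Real.iInf_nonneg fun w => norm_nonneg _
  have hdle : ∀ (s : Finset H) (w : H), w ∈ D s → d s ≤ ‖w‖ := by
    intro s w hw
    exact ciInf_le (hbdd s) (⟨w, hw⟩ : D s)
  have hmono : ∀ s t : Finset H, ↑t ⊆ A → s ⊆ t → d s ≤ d t := by
    intro s t ht hst
    have hne : Nonempty (D t) := (hfin t ht).to_subtype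
    exact le_ciInf fun w => hdle s w (hDmono hst w.2)
  obtain ⟨x0, hx0⟩ := hA
  set M : ℝ := ‖x0‖ + r with hMdef
  have hdM : ∀ s : Finset H, ↑s ⊆ A → d s ≤ M := by
    intro s hs
    have hs' : ↑(insert x0 s) ⊆ A := by
      rw [Finset.coe_insert]
      exact Set.insert_subset hx0 hs
    have h1 : d s ≤ d (insert x0 s) := hmono _ _ hs' (Finset.subset_insert _ _)
    have h2 : ‖Y _ hs'‖ = d (insert x0 s) := hY2 _ hs'
    have h3 : Y _ hs' ∈ Metric.closedBall x0 r :=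
      Set.mem_iInter₂.1 (hY1 _ hs') x0 (Finset.mem_insert_self _ _)
    rw [Metric.mem_closedBall, dist_eq_norm] at h3
    have h4 : ‖Y _ hs'‖ ≤ ‖Y _ hs' - x0‖ + ‖x0‖ := by
      simpa using norm_add_le (Y _ hs' - x0) x0
    rw [hMdef]; linarith
  set dSet : Set ℝ := d '' {s : Finset H | ↑s ⊆ A} with hdSetdef
  have hdSetne : dSet.Nonempty := ⟨d ∅, ⟨∅, by simp, rfl⟩⟩
  have hdSetbdd : BddAbove dSet := ⟨M, by rintro _ ⟨s, hs, rfl⟩; exact hdM s hs⟩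
  set dstar : ℝ := sSup dSet with hdstardef
  have hdstar_le : ∀ s : Finset H, ↑s ⊆ A → d s ≤ dstar := fun s hs =>
    le_csSup hdSetbdd ⟨s, hs, rfl⟩
  have hdstar0 : 0 ≤ dstar := le_trans (hd0 ∅) (hdstar_le ∅ (by simp))
  have hseq : ∀ n : ℕ, ∃ s : Finset H, ↑s ⊆ A ∧ dstar - 1 / (n + 1) < d s := by
    intro n
    have hlt : dstar - 1 / (n + 1 : ℝ) < dstar := by
      have : (0 : ℝ) < 1 / (n + 1 : ℝ) := by positivity
      linarith
    obtain ⟨v, hv, hvlt⟩ := exists_lt_of_lt_csSup hdSetne hlt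
    obtain ⟨s, hs, rfl⟩ := hv
    exact ⟨s, hs, hvlt⟩
  choose S hS1 hS2 using hseq
  set T : ℕ → Finset H := fun n => (Finset.range (n + 1)).biUnion S with hTdef
  have hT1 : ∀ n, ↑(T n) ⊆ A := by
    intro n z hz
    rw [Finset.mem_coe, Finset.mem_biUnion] at hz
    obtain ⟨i, _, hi⟩ := hz
    exact hS1 i hi
  have hTmono : ∀ m n, m ≤ n → T m ⊆ T n := fun m n hmn =>
    Finset.biUnion_subset_biUnion_of_subset_left _ (Finset.range_mono (by omega))
  have hTlb : ∀ n, dstar - 1 / (n + 1) < d (T n) :=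
    fun n => lt_of_lt_of_le (hS2 n)
      (hmono (S n) (T n) (hT1 n) (Finset.subset_biUnion_of_mem S (Finset.mem_range.2 n.lt_succ_self)))
  have hTub : ∀ n, d (T n) ≤ dstar := fun n => hdstar_le _ (hT1 n)
  set y : ℕ → H := fun n => Y (T n) (hT1 n) with hydef
  have hy_mem : ∀ n, y n ∈ D (T n) := fun n => hY1 _ _
  have hy_norm : ∀ n, ‖y n‖ = d (T n) := fun n => hY2 _ _
  -- key parallelogram estimate
  have hest : ∀ (s : Finset H) (a b : H), a ∈ D s → b ∈ D s →
      ‖a - b‖ ^ 2 ≤ 2 * ‖a‖ ^ 2 + 2 * ‖b‖ ^ 2 - 4 * (d s) ^ 2 := by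
    intro s a b ha hb
    have hmid : (1 / 2 : ℝ) • a + (1 / 2 : ℝ) • b ∈ D s :=
      hDconv s ha hb (by norm_num) (by norm_num) (by norm_num)
    have h1 : d s ≤ ‖(1 / 2 : ℝ) • a + (1 / 2 : ℝ) • b‖ := hdle s _ hmid
    have h2 : ‖(1 / 2 : ℝ) • a + (1 / 2 : ℝ) • b‖ = ‖a + b‖ / 2 := by
      rw [← smul_add, norm_smul]
      simp
      ring
    have hpar := parallelogram_law_with_norm ℝ a b
    have h3 : 2 * d s ≤ ‖a + b‖ := by rw [h2] at h1; linarith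
    nlinarith [hd0 s, norm_nonneg (a + b), sq_nonneg (‖a + b‖ - 2 * d s)]
  have hsqbound : ∀ (N n : ℕ) (a b : H), a ∈ D (T N) → b ∈ D (T N) →
      ‖a‖ ≤ dstar → ‖b‖ ≤ dstar →
      ‖a - b‖ ^ 2 ≤ 8 * dstar * (1 / (N + 1)) := by
    intro N n a b ha hb hna hnb
    have h := hest (T N) a b ha hb
    have h1 := hTlb N
    have h2 := hTub N
    have h3 := hd0 (T N)
    have hN : (0 : ℝ) < 1 / (N + 1 : ℝ) := by positivity
    nlinarith [norm_nonneg a, norm_nonneg b]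
  have hkey : ∀ (N n m : ℕ), N ≤ n → N ≤ m →
      dist (y n) (y m) ≤ Real.sqrt (8 * dstar * (1 / (N + 1))) := by
    intro N n m hn hm
    have han : y n ∈ D (T N) := hDmono (hTmono N n hn) (hy_mem n)
    have ham : y m ∈ D (T N) := hDmono (hTmono N m hm) (hy_mem m)
    have hna : ‖y n‖ ≤ dstar := by rw [hy_norm]; exact hTub n
    have hnb : ‖y m‖ ≤ dstar := by rw [hy_norm]; exact hTub m
    have h := hsqbound N n (y n) (y m) han ham hna hnb
    calc dist (y n) (y m) = ‖y n - y m‖ := dist_eq_norm _ _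
      _ = Real.sqrt (‖y n - y m‖ ^ 2) := (Real.sqrt_sq (norm_nonneg _)).symm
      _ ≤ Real.sqrt (8 * dstar * (1 / (N + 1))) := Real.sqrt_le_sqrt h
  have hb0 : Tendsto (fun N : ℕ => Real.sqrt (8 * dstar * (1 / (N + 1 : ℝ)))) atTop (𝓝 0) := by
    have h1 : Tendsto (fun N : ℕ => (1 : ℝ) / (N + 1)) atTop (𝓝 0) :=
      tendsto_one_div_add_atTop_nhds_zero_nat
    have h2 : Tendsto (fun N : ℕ => 8 * dstar * (1 / (N + 1 : ℝ))) atTop (𝓝 (8 * dstar * 0)) :=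
      h1.const_mul _
    rw [mul_zero] at h2
    have h3 := (Real.continuous_sqrt.tendsto 0).comp h2
    simpa [Function.comp_def] using h3
  have hcauchy : CauchySeq y :=
    cauchySeq_of_le_tendsto_0 _ (fun n m N hn hm => hkey N n m hn hm) hb0
  obtain ⟨z, hz⟩ := cauchySeq_tendsto_of_complete hcauchy
  have hzmem : ∀ N, z ∈ D (T N) := by
    intro N
    refine (hDclosed (T N)).mem_of_tendsto hz ?_
    exact Filter.eventually_atTop.2 ⟨N, fun n hn => hDmono (hTmono N n hn) (hy_mem n)⟩
  refine ⟨z, fun x hx => ?_⟩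
  have hs' : ∀ n : ℕ, ↑(insert x (T n)) ⊆ A := by
    intro n
    rw [Finset.coe_insert]
    exact Set.insert_subset hx (hT1 n)
  set w : ℕ → H := fun n => Y (insert x (T n)) (hs' n) with hwdef
  have hw_mem : ∀ n, w n ∈ D (insert x (T n)) := fun n => hY1 _ _
  have hw_norm : ∀ n, ‖w n‖ = d (insert x (T n)) := fun n => hY2 _ _
  have hwTn : ∀ n, w n ∈ D (T n) := fun n => hDmono (Finset.subset_insert _ _) (hw_mem n)
  have hwx : ∀ n, dist (w n) x ≤ r := by
    intro n
    have := Set.mem_iInter₂.1 (hw_mem n) x (Finset.mem_insert_self _ _)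
    rwa [Metric.mem_closedBall] at this
  have hyw : ∀ n, dist (y n) (w n) ≤ Real.sqrt (8 * dstar * (1 / (n + 1))) := by
    intro n
    have hna : ‖y n‖ ≤ dstar := by rw [hy_norm]; exact hTub n
    have hnb : ‖w n‖ ≤ dstar := by rw [hw_norm]; exact hdstar_le _ (hs' n)
    have h := hsqbound n n (y n) (w n) (hy_mem n) (hwTn n) hna hnb
    calc dist (y n) (w n) = ‖y n - w n‖ := dist_eq_norm _ _
      _ = Real.sqrt (‖y n - w n‖ ^ 2) := (Real.sqrt_sq (norm_nonneg _)).symm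
      _ ≤ _ := Real.sqrt_le_sqrt h
  have hineq : ∀ n, dist z x ≤ dist z (y n) + Real.sqrt (8 * dstar * (1 / (n + 1))) + r := by
    intro n
    calc dist z x ≤ dist z (y n) + dist (y n) (w n) + dist (w n) x := dist_triangle4 z (y n) (w n) x
      _ ≤ dist z (y n) + Real.sqrt (8 * dstar * (1 / (n + 1))) + r :=
        add_le_add (add_le_add le_rfl (hyw n)) (hwx n)
  have hdist0 : Tendsto (fun n => dist z (y n)) atTop (𝓝 0) := by
    have := (tendsto_const_nhds : Tendsto (fun _ : ℕ => z) atTop (𝓝 z)).dist hz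
    simpa using this
  have hlim : Tendsto (fun n : ℕ => dist z (y n) + Real.sqrt (8 * dstar * (1 / (n + 1))) + r)
      atTop (𝓝 (0 + 0 + r)) := (hdist0.add hb0).add tendsto_const_nhds
  rw [zero_add, zero_add] at hlim
  have hfinal : dist z x ≤ r := ge_of_tendsto' hlim hineq
  rwa [dist_comm] at hfinal

theorem stmt17 {H : Type*} [NormedAddCommGroup H] [InnerProductSpace ℝ H] [CompleteSpace H] (A : Set H)
    (hb : Bornology.IsBounded A) (hr : chebRadius A = 1) :
    ∀ n : ℕ, 2 ≤ n → ∃ (k : ℕ) (x : Fin k → H), (∀ i, x i ∈ A) ∧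
      (⋂ i, Metric.closedBall (x i) (1 - 1 / (n : ℝ))) = ∅ := by
  intro n hn
  by_contra hcon
  push_neg at hcon
  set r : ℝ := 1 - 1 / (n : ℝ) with hrdef
  have hn2 : (2 : ℝ) ≤ (n : ℝ) := by exact_mod_cast hn
  have hnpos : (0 : ℝ) < (n : ℝ) := by linarith
  have hninv : (0 : ℝ) < 1 / (n : ℝ) := by positivity
  have hninv2 : 1 / (n : ℝ) ≤ 1 / 2 := by
    apply one_div_le_one_div_of_le <;> linarith
  have hr0 : 0 ≤ r := by rw [hrdef]; linarith
  have hA : A.Nonempty := by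
    by_contra hAe
    rw [Set.not_nonempty_iff_eq_empty] at hAe
    subst hAe
    have hz : chebRadius (∅ : Set H) = 0 := by
      unfold chebRadius
      have h1 : ∀ y : H, (⨆ x : (∅ : Set H), ‖(x : H) - y‖) = 0 := by
        intro y
        exact Real.iSup_of_isEmpty _
      simp only [h1]
      exact ciInf_const
    rw [hz] at hr
    norm_num at hr
  have hfin : ∀ s : Finset H, ↑s ⊆ A → (⋂ x ∈ s, Metric.closedBall x r).Nonempty := by
    intro s hs
    have hne := hcon s.card (fun i => (s.equivFin.symm i : H)) (fun i => hs (s.equivFin.symm i).2)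
    obtain ⟨z, hzmem⟩ := hne
    refine ⟨z, Set.mem_iInter₂.2 fun x hx => ?_⟩
    have := Set.mem_iInter.1 hzmem (s.equivFin ⟨x, hx⟩)
    simpa using this
  obtain ⟨z, hz⟩ := aux_ball_inter hr0 hA hfin
  have hsup : (⨆ x : A, ‖(x : H) - z‖) ≤ r := by
    refine Real.iSup_le (fun x => ?_) hr0
    have := hz x x.2
    rwa [dist_eq_norm] at this
  have h1 : chebRadius A ≤ r := by
    unfold chebRadius
    refine le_trans (ciInf_le ?_ z) hsup
    exact ⟨0, by rintro _ ⟨y, rfl⟩; exact Real.iSup_nonneg fun x => norm_nonneg _⟩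
  rw [hr, hrdef] at h1
  linarith
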